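/- arXiv:2309.06968 — 3 statements merged into one kernel-verified Lean document; each statement's English description precedes it below -/
import Mathlib

section
/- In every continuous quantale Q, if q₁ ≪ q₂ then there exists q ≪ 1 (the unit of the quantale) such that q₁ ≪ q₂ ⊗ q. -/
/-- `a` is way-below `b`: for every nonempty directed `D` with `b ≤ sSup D`,
some element of `D` dominates `a`. -/
def WayBelow {Q : Type*} [CompleteLattice Q] (a b : Q) : Prop :=
  ∀ D : Set Q, D.Nonempty → DirectedOn (· ≤ ·) D → b ≤ sSup D → ∃ d ∈ D, a ≤ d

/-- A complete lattice is continuous if every element is the join of the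
elements way-below it. -/
def ContinuousLattice (Q : Type*) [CompleteLattice Q] : Prop :=
  ∀ x : Q, x = sSup {y | WayBelow y x}

lemma wb_bot {Q : Type*} [CompleteLattice Q] (b : Q) : WayBelow ⊥ b := by
  intro D ⟨d, hd⟩ _ _
  exact ⟨d, hd, bot_le⟩

lemma wb_le_left {Q : Type*} [CompleteLattice Q] {a a' b : Q} (h : a ≤ a')
    (hw : WayBelow a' b) : WayBelow a b := by
  intro D hne hdir hle
  obtain ⟨d, hd, hd'⟩ := hw D hne hdir hle
  exact ⟨d, hd, h.trans hd'⟩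

lemma wb_le_right {Q : Type*} [CompleteLattice Q] {a b b' : Q} (hw : WayBelow a b)
    (h : b ≤ b') : WayBelow a b' := fun D hne hdir hle => hw D hne hdir (h.trans hle)

lemma wb_sup {Q : Type*} [CompleteLattice Q] {x y c : Q} (hx : WayBelow x c)
    (hy : WayBelow y c) : WayBelow (x ⊔ y) c := by
  intro D hne hdir hle
  obtain ⟨d₁, hd₁, h₁⟩ := hx D hne hdir hle
  obtain ⟨d₂, hd₂, h₂⟩ := hy D hne hdir hle
  obtain ⟨d, hd, hda, hdb⟩ := hdir d₁ hd₁ d₂ hd₂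
  exact ⟨d, hd, sup_le (h₁.trans hda) (h₂.trans hdb)⟩

theorem quantale_interpolation {Q : Type*} [CompleteLattice Q] [Monoid Q] [IsQuantale Q]
    (hcont : ContinuousLattice Q) {q₁ q₂ : Q} (h : WayBelow q₁ q₂) :
    ∃ q : Q, WayBelow q 1 ∧ WayBelow q₁ (q₂ * q) := by
  set D : Set Q := {x | ∃ q : Q, WayBelow q 1 ∧ WayBelow x (q₂ * q)} with hD
  have hne : D.Nonempty := ⟨⊥, ⊥, wb_bot 1, wb_bot _⟩
  have hdir : DirectedOn (· ≤ ·) D := by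
    rintro x ⟨q, hq1, hxq⟩ y ⟨q', hq'1, hyq⟩
    refine ⟨x ⊔ y, ⟨q ⊔ q', wb_sup hq1 hq'1, ?_⟩, le_sup_left, le_sup_right⟩
    have h1 : WayBelow x (q₂ * (q ⊔ q')) :=
      wb_le_right hxq (mul_le_mul_right le_sup_left q₂)
    have h2 : WayBelow y (q₂ * (q ⊔ q')) :=
      wb_le_right hyq (mul_le_mul_right le_sup_right q₂)
    exact wb_sup h1 h2
  have hle : q₂ ≤ sSup D := by
    have : q₂ = q₂ * sSup {q | WayBelow q 1} := by
      rw [← hcont 1, mul_one]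
    rw [this, mul_sSup_distrib]
    refine iSup₂_le fun q hq => ?_
    have : q₂ * q = sSup {x | WayBelow x (q₂ * q)} := hcont _
    rw [this]
    exact sSup_le_sSup fun x hx => ⟨q, hq, hx⟩
  obtain ⟨d, ⟨q, hq1, hdq⟩, hd⟩ := h D hne hdir hle
  exact ⟨q, hq1, wb_le_left hd hdq⟩
end

section
/- In a Q-metric space (X,d) with Q a continuous quantale, if y ∈ B(x,δ) with δ ≪ 1, then there exists δ' ≪ 1 such that B(y,δ') ⊆ B(x,δ). -/
/-- Open ball in a `Q`-metric space. -/
def ball {Q X : Type*} [CompleteLattice Q] (d : X → X → Q) (x : X) (δ : Q) : Set X :=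
  {y | WayBelow δ (d x y)}

section aux
variable {Q : Type*} [CompleteLattice Q]

theorem wb_le {a b : Q} (h : WayBelow a b) : a ≤ b := by
  obtain ⟨d, hd, hle⟩ := h {b} ⟨b, rfl⟩ (directedOn_singleton b) (by simp)
  simpa [Set.mem_singleton_iff.mp hd] using hle

theorem wb_mono_left {a b c : Q} (hab : a ≤ b) (h : WayBelow b c) : WayBelow a c := by
  intro D hne hdir hle
  obtain ⟨e, he, hbe⟩ := h D hne hdir hle
  exact ⟨e, he, hab.trans hbe⟩

theorem wb_mono_right {a b c : Q} (h : WayBelow a b) (hbc : b ≤ c) : WayBelow a c := by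
  intro D hne hdir hle
  exact h D hne hdir (hbc.trans hle)

theorem bot_wb (b : Q) : WayBelow ⊥ b := by
  intro D hne _ _
  obtain ⟨e, he⟩ := hne
  exact ⟨e, he, bot_le⟩

theorem wb_sup_s6 {a b c : Q} (ha : WayBelow a c) (hb : WayBelow b c) : WayBelow (a ⊔ b) c := by
  intro D hne hdir hle
  obtain ⟨e₁, he₁, h₁⟩ := ha D hne hdir hle
  obtain ⟨e₂, he₂, h₂⟩ := hb D hne hdir hle
  obtain ⟨e, he, hge₁, hge₂⟩ := hdir e₁ he₁ e₂ he₂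
  exact ⟨e, he, sup_le (h₁.trans hge₁) (h₂.trans hge₂)⟩

theorem wb_set_dir (b : Q) : DirectedOn (· ≤ ·) {y | WayBelow y b} := by
  intro a ha c hc
  exact ⟨a ⊔ c, wb_sup_s6 ha hc, le_sup_left, le_sup_right⟩

theorem wb_set_ne (b : Q) : Set.Nonempty {y | WayBelow y b} := ⟨⊥, bot_wb b⟩

/-- Interpolation property of continuous lattices. -/
theorem wb_interpolate (hcont : ContinuousLattice Q) {a b : Q} (h : WayBelow a b) :
    ∃ c, WayBelow a c ∧ WayBelow c b := by
  set D : Set Q := {e | ∃ c, WayBelow e c ∧ WayBelow c b} with hD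
  have hne : D.Nonempty := ⟨⊥, ⊥, bot_wb _, bot_wb b⟩
  have hdir : DirectedOn (· ≤ ·) D := by
    rintro e₁ ⟨c₁, he₁, hc₁⟩ e₂ ⟨c₂, he₂, hc₂⟩
    refine ⟨e₁ ⊔ e₂, ⟨c₁ ⊔ c₂, ?_, wb_sup_s6 hc₁ hc₂⟩, le_sup_left, le_sup_right⟩
    exact wb_sup_s6 (wb_mono_right he₁ le_sup_left) (wb_mono_right he₂ le_sup_right)
  have hle : b ≤ sSup D := by
    conv_lhs => rw [hcont b]
    refine sSup_le fun c hc => ?_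
    conv_lhs => rw [hcont c]
    exact sSup_le fun e he => le_sSup ⟨c, he, hc⟩
  obtain ⟨e, ⟨c, hec, hcb⟩, hae⟩ := h D hne hdir hle
  exact ⟨c, wb_mono_left hae hec, hcb⟩

end aux

theorem ball_mem_nhds {Q X : Type*} [CompleteLattice Q] [Monoid Q] [IsQuantale Q]
    (hcont : ContinuousLattice Q) (d : X → X → Q)
    (hrefl : ∀ x : X, 1 ≤ d x x) (htri : ∀ x y z : X, d x y * d y z ≤ d x z)
    (x y : X) (δ : Q) (hδ : WayBelow δ 1) (hy : y ∈ ball d x δ) :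
    ∃ δ' : Q, WayBelow δ' 1 ∧ ball d y δ' ⊆ ball d x δ := by
  obtain ⟨c, hδc, hc⟩ := wb_interpolate hcont hy
  -- the directed family {d x y * q | q ≪ 1} joins up to d x y
  set T : Set Q := (fun q => d x y * q) '' {q | WayBelow q 1} with hT
  have hTne : T.Nonempty := (wb_set_ne (1 : Q)).image _
  have hTdir : DirectedOn (· ≤ ·) T := by
    rintro _ ⟨q₁, hq₁, rfl⟩ _ ⟨q₂, hq₂, rfl⟩
    exact ⟨d x y * (q₁ ⊔ q₂), ⟨q₁ ⊔ q₂, wb_sup_s6 hq₁ hq₂, rfl⟩,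
      mul_le_mul_right le_sup_left _, mul_le_mul_right le_sup_right _⟩
  have hTle : d x y ≤ sSup T := by
    have : d x y = d x y * sSup {q | WayBelow q 1} := by
      rw [← hcont 1, mul_one]
    rw [this, IsQuantale.mul_sSup_distrib]
    simp only [iSup_le_iff]
    intro q hq
    exact le_sSup ⟨q, hq, rfl⟩
  obtain ⟨_, ⟨q, hq1, rfl⟩, hcq⟩ := hc T hTne hTdir hTle
  refine ⟨q, hq1, fun z hz => ?_⟩
  have hle : d x y * q ≤ d x z :=
    le_trans (mul_le_mul_right (wb_le hz) _) (htri x y z)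
  exact wb_mono_right hδc (hcq.trans hle)
end

section
/- In a Q-metric space with Q a continuous quantale, if δ₁, δ₂ ≪ 1 and δ ≪ δ₁ ⊗ δ₂, then B_R(B_R(A,δ₁),δ₂) ⊆ B_R(A,δ), where B_R(A,δ) = {y : ∃x ∈ A, δ ≪ d(x,y)}. -/
/-- `B_R(A,δ)`: points belonging to `A` with precision greater than `δ`. -/
def BR {Q X : Type*} [CompleteLattice Q] (d : X → X → Q) (A : Set X) (δ : Q) : Set X :=
  {y | ∃ x ∈ A, WayBelow δ (d x y)}

theorem BR_tensor {Q X : Type*} [CompleteLattice Q] [Monoid Q] [IsQuantale Q]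
    (hcont : ContinuousLattice Q) (d : X → X → Q)
    (hrefl : ∀ x : X, 1 ≤ d x x) (htri : ∀ x y z : X, d x y * d y z ≤ d x z)
    (A : Set X) (δ δ₁ δ₂ : Q) (h₁ : WayBelow δ₁ 1) (h₂ : WayBelow δ₂ 1)
    (hδ : WayBelow δ (δ₁ * δ₂)) :
    BR d (BR d A δ₁) δ₂ ⊆ BR d A δ := by
  intro z hz
  obtain ⟨y, ⟨x, hxA, hxy⟩, hyz⟩ := hz
  have le1 : δ₁ ≤ d x y := by
    obtain ⟨e, he, hle⟩ := hxy {d x y} ⟨_, rfl⟩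
      (directedOn_singleton (d x y)) (le_sSup rfl)
    exact hle.trans (le_of_eq he)
  have le2 : δ₂ ≤ d y z := by
    obtain ⟨e, he, hle⟩ := hyz {d y z} ⟨_, rfl⟩
      (directedOn_singleton (d y z)) (le_sSup rfl)
    exact hle.trans (le_of_eq he)
  have hle : δ₁ * δ₂ ≤ d x z := le_trans (mul_le_mul' le1 le2) (htri x y z)
  exact ⟨x, hxA, fun D hne hdir hsub => hδ D hne hdir (hle.trans hsub)⟩
end
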